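/- Fix r ≥ 1 and partitions λ, μ, ν, κ with μ/λ a horizontal r-ribbon strip, ν/λ a vertical r-ribbon strip, κ/μ a vertical r-ribbon strip, and κ/ν a horizontal r-ribbon strip. Let S ⊂ ℤ be the set of diagonals containing heads of ribbons in both standardisations of μ/λ and ν/λ, and T ⊂ ℤ the set of diagonals containing heads of ribbons in both standardisations of κ/μ and κ/ν. Then spinᵛ(κ/μ) + spin(κ/ν) − spin(μ/λ) − spinᵛ(ν/λ) = Σ_{k∈T} Δʳ(μ,ν)_{k+1} − Σ_{k∈S} Δʳ(μ,ν)_k, where Δʳ(μ,ν)_k = E(μ)_{k−r} − E(ν)_k with E(λ)_k = Σ_{i≥k} edge(λ)_i. -/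

import Mathlib

open scoped Classical

/-- A doubly infinite bit sequence: a function `ℤ → ℕ` with all values `≤ 1`. -/
def IsBitSeq (s : ℤ → ℕ) : Prop := ∀ i, s i ≤ 1

/-- The quadruple `(w (i-r), t (i-r), s i, w i)` equals `(1,0,0,1)`:
the strip `t/s` with witness `w` has an `r`-ribbon at position `i`. -/
def Quad (r : ℕ) (s t w : ℤ → ℕ) (i : ℤ) : Prop :=
  w (i - r) = 1 ∧ t (i - r) = 0 ∧ s i = 0 ∧ w i = 1

/-- `w` is a witness for `t/s` being a horizontal `r`-ribbon strip: for every `i`, the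
quadruple `(w (i-r), t (i-r), s i, w i)` is of the form `(a,a,b,b)` or equals `(1,0,0,1)`,
the latter happening only finitely often. -/
def IsWitness (r : ℕ) (s t w : ℤ → ℕ) : Prop :=
  (∀ i : ℤ, (w (i - r) = t (i - r) ∧ s i = w i) ∨ Quad r s t w i) ∧
    {i : ℤ | Quad r s t w i}.Finite

/-- `t/s` is a horizontal `r`-ribbon strip (`s ≤ʰᵣ t`). -/
def HStrip (r : ℕ) (s t : ℤ → ℕ) : Prop := ∃ w, IsWitness r s t w

/-- The height `∑_{j=1}^{r-1} w (i - j)` of a ribbon at position `i` read off from `w`. -/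
def hgtAt (r : ℕ) (w : ℤ → ℕ) (i : ℤ) : ℕ := ∑ j ∈ Finset.Ico 1 r, w (i - (j : ℤ))

/-- The witness of a horizontal `r`-ribbon strip (it is unique). -/
noncomputable def theWitness (r : ℕ) (s t : ℤ → ℕ) : ℤ → ℕ :=
  if h : HStrip r s t then h.choose else s

/-- The strip `t/s` has a ribbon at position (head diagonal) `i`. -/
def RibbonAt (r : ℕ) (s t : ℤ → ℕ) (i : ℤ) : Prop :=
  Quad r s t (theWitness r s t) i

/-- The number of `r`-ribbons of the strip `t/s`. -/
noncomputable def ribCount (r : ℕ) (s t : ℤ → ℕ) : ℕ :=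
  {i : ℤ | RibbonAt r s t i}.ncard

/-- Twice the spin of the horizontal `r`-ribbon strip `t/s`: the total height of the
ribbons of its standardisation. -/
noncomputable def twoSpin (r : ℕ) (s t : ℤ → ℕ) : ℕ :=
  ∑ᶠ i ∈ {i : ℤ | RibbonAt r s t i}, hgtAt r (theWitness r s t) i

/-- A partition: a weakly decreasing, eventually zero function `ℕ → ℕ`. -/
def IsPartition (f : ℕ → ℕ) : Prop :=
  (∀ i j : ℕ, i ≤ j → f j ≤ f i) ∧ ∃ N : ℕ, ∀ n : ℕ, N ≤ n → f n = 0

/-- The edge sequence of a partition: bit `1` exactly at the positions `f j - j - 1`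
(for `j : ℕ`); it is eventually `1` to the left and `0` to the right, and adding a
square on diagonal `k` replaces the substring `10` at positions `(k-1, k)` by `01`. -/
noncomputable def edgeSeq (f : ℕ → ℕ) (k : ℤ) : ℕ :=
  if ∃ j : ℕ, (f j : ℤ) - (j : ℤ) - 1 = k then 1 else 0

/-- `E(λ)_k = Σ_{i ≥ k} edge(λ)_i`: the vertical coordinate of the point where the
boundary of `λ` crosses the diagonal `d_k`. -/
noncomputable def Ecross (f : ℕ → ℕ) (k : ℤ) : ℕ := ∑ᶠ i ∈ Set.Ici k, edgeSeq f i

/-- Transposition on edge sequences: reverse and complement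
(`edge(λᵀ) = revc (edge λ)`). -/
def revc (s : ℤ → ℕ) : ℤ → ℕ := fun i => 1 - s (-1 - i)

/-- `t/s` is a vertical `r`-ribbon strip: its transpose is a horizontal one. -/
def VStrip (r : ℕ) (s t : ℤ → ℕ) : Prop := HStrip r (revc s) (revc t)

/-- The vertical `r`-ribbon strip `t/s` has, in its standardisation (ribbons added by
decreasing head diagonal), a ribbon with head on diagonal `k`. -/
def VRibbonAt (r : ℕ) (s t : ℤ → ℕ) (k : ℤ) : Prop :=
  RibbonAt r (revc s) (revc t) ((r : ℤ) - 1 - k)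

/-- Twice the spin of a vertical `r`-ribbon strip: the sum of the heights (in the
original, untransposed orientation) of the ribbons of its standardisation. -/
noncomputable def twoSpinV (r : ℕ) (s t : ℤ → ℕ) : ℕ :=
  ∑ᶠ q ∈ {q : ℤ | RibbonAt r (revc s) (revc t) q},
    (r - 1 - hgtAt r (theWitness r (revc s) (revc t)) q)

/-- `Δʳ(μ,ν)_k = E(μ)_{k-r} - E(ν)_k`. -/
noncomputable def Delta (r : ℕ) (mu nu : ℕ → ℕ) (k : ℤ) : ℚ :=
  (Ecross mu (k - r) : ℚ) - (Ecross nu k : ℚ)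

lemma theWitness_spec {r : ℕ} {s t : ℤ → ℕ} (h : HStrip r s t) :
    IsWitness r s t (theWitness r s t) := by
  rw [theWitness, dif_pos h]; exact h.choose_spec

lemma hstrip_struct (r : ℕ) (s t : ℤ → ℕ) (h : HStrip r s t) :
    ∃ Rf : Finset ℤ,
      (∀ i, RibbonAt r s t i ↔ i ∈ Rf) ∧
      (∀ j, theWitness r s t j = s j + (if j ∈ Rf then 1 else 0)) ∧
      (∀ j, theWitness r s t j = t j + (if j + r ∈ Rf then 1 else 0)) ∧
      (∀ k ∈ Rf, s k = 0 ∧ t (k - r) = 0 ∧ theWitness r s t (k - r) = 1 ∧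
        theWitness r s t k = 1) := by
  obtain ⟨hdi, hfin⟩ := theWitness_spec h
  set w := theWitness r s t with hw
  refine ⟨hfin.toFinset, fun i => (Set.Finite.mem_toFinset hfin).symm.trans Iff.rfl, ?_, ?_, ?_⟩
  · intro j
    by_cases hq : Quad r s t w j
    · simp only [Set.Finite.mem_toFinset, Set.mem_setOf_eq, hq, if_true]
      rw [hq.2.2.2, hq.2.2.1]
    · simp only [Set.Finite.mem_toFinset, Set.mem_setOf_eq, hq, if_false]
      rcases hdi j with ⟨_, h2⟩ | h2
      · omega
      · exact absurd h2 hq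
  · intro j
    by_cases hq : Quad r s t w (j + r)
    · simp only [Set.Finite.mem_toFinset, Set.mem_setOf_eq, hq, if_true]
      have h1 := hq.1
      have h2 := hq.2.1
      rw [add_sub_cancel_right] at h1 h2
      omega
    · simp only [Set.Finite.mem_toFinset, Set.mem_setOf_eq, hq, if_false]
      rcases hdi (j + r) with ⟨h2, _⟩ | h2
      · rw [add_sub_cancel_right] at h2; omega
      · exact absurd h2 hq
  · intro k hk
    rw [Set.Finite.mem_toFinset] at hk
    exact ⟨hk.2.2.1, hk.2.1, hk.1, hk.2.2.2⟩

lemma cast_ite_nat (p : Prop) [Decidable p] :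
    (((if p then (1:ℕ) else 0) : ℕ) : ℚ) = if p then (1:ℚ) else 0 := by
  split <;> simp

lemma hstrip_main (r : ℕ) (s t : ℤ → ℕ) (h : HStrip r s t) :
    ∃ Rf : Finset ℤ,
      (∀ i, RibbonAt r s t i ↔ i ∈ Rf) ∧
      (∀ j : ℤ, (t j : ℚ) + (if j + r ∈ Rf then 1 else 0)
          = (s j : ℚ) + (if j ∈ Rf then 1 else 0)) ∧
      (∀ k ∈ Rf, s k = 0 ∧ ((s (k - r) : ℚ) + (if k - r ∈ Rf then 1 else 0) = 1)) ∧
      (twoSpin r s t : ℚ) =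
        ∑ k ∈ Rf, ∑ j ∈ Finset.Ico 1 r,
          ((s (k - (j:ℤ)) : ℚ) + (if k - (j:ℤ) ∈ Rf then 1 else 0)) := by
  obtain ⟨Rf, hmem, hws, hwt, hquad⟩ := hstrip_struct r s t h
  refine ⟨Rf, hmem, ?_, ?_, ?_⟩
  · intro j
    have e : t j + (if j + r ∈ Rf then 1 else 0) = s j + (if j ∈ Rf then 1 else 0) := by
      rw [← hws j, ← hwt j]
    calc (t j : ℚ) + (if j + r ∈ Rf then 1 else 0)
        = ((t j + (if j + r ∈ Rf then 1 else 0) : ℕ) : ℚ) := by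
          push_cast [cast_ite_nat]; ring
      _ = ((s j + (if j ∈ Rf then 1 else 0) : ℕ) : ℚ) := by rw [e]
      _ = (s j : ℚ) + (if j ∈ Rf then 1 else 0) := by push_cast [cast_ite_nat]; ring
  · intro k hk
    refine ⟨(hquad k hk).1, ?_⟩
    have e : s (k - r) + (if k - r ∈ Rf then 1 else 0) = 1 := by
      rw [← hws (k - r)]; exact (hquad k hk).2.2.1
    calc (s (k-r) : ℚ) + (if k - r ∈ Rf then 1 else 0)
        = ((s (k-r) + (if k - r ∈ Rf then 1 else 0) : ℕ) : ℚ) := by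
          push_cast [cast_ite_nat]; ring
      _ = 1 := by rw [e]; norm_num
  · have hset : {i : ℤ | RibbonAt r s t i} = (Rf : Set ℤ) := by
      ext i; simpa using hmem i
    rw [twoSpin, hset, finsum_mem_coe_finset]
    push_cast
    refine Finset.sum_congr rfl fun k _ => ?_
    rw [hgtAt]
    push_cast
    refine Finset.sum_congr rfl fun j _ => ?_
    rw [hws (k - (j:ℤ))]
    push_cast [cast_ite_nat]; ring

lemma sum_Ico_reflect (r : ℕ) (g : ℤ → ℚ) :
    ∑ j ∈ Finset.Ico 1 r, g (j:ℤ) = ∑ j ∈ Finset.Ico 1 r, g ((r:ℤ) - (j:ℤ)) := by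
  refine Finset.sum_nbij' (i := fun j => r - j) (j := fun j => r - j) ?_ ?_ ?_ ?_ ?_
  · intro a ha; simp only [Finset.mem_Ico] at ha ⊢; omega
  · intro a ha; simp only [Finset.mem_Ico] at ha ⊢; omega
  · intro a ha; simp only [Finset.mem_Ico] at ha ⊢; omega
  · intro a ha; simp only [Finset.mem_Ico] at ha ⊢; omega
  · intro a ha; simp only [Finset.mem_Ico] at ha
    congr 1; push_cast [Nat.cast_sub (by omega : a ≤ r)]; ring

lemma revc_cast (s : ℤ → ℕ) (hs : IsBitSeq s) (j : ℤ) :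
    ((revc s j : ℕ) : ℚ) = 1 - (s (-1 - j) : ℚ) := by
  have := hs (-1 - j)
  rw [revc]
  push_cast [Nat.cast_sub this]
  ring

lemma vstrip_main (r : ℕ) (hr : 1 ≤ r) (s t : ℤ → ℕ) (hs : IsBitSeq s) (ht : IsBitSeq t)
    (h : VStrip r s t) :
    ∃ Df : Finset ℤ,
      (∀ k, VRibbonAt r s t k ↔ k ∈ Df) ∧
      (∀ j : ℤ, (t j : ℚ) + (if j + r ∈ Df then 1 else 0)
          = (s j : ℚ) + (if j ∈ Df then 1 else 0)) ∧
      (∀ k ∈ Df, s (k - r) = 1) ∧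
      (twoSpinV r s t : ℚ) =
        ∑ k ∈ Df, ∑ j ∈ Finset.Ico 1 r,
          ((s (k - (j:ℤ)) : ℚ) - (if k - (j:ℤ) + r ∈ Df then 1 else 0)) := by
  obtain ⟨Qf, hmem, hws, hwt, hquad⟩ := hstrip_struct r (revc s) (revc t) h
  set w := theWitness r (revc s) (revc t) with hwdef
  have hdf : ∀ k : ℤ, k ∈ Qf.image (fun q => (r:ℤ) - 1 - q) ↔ (r:ℤ) - 1 - k ∈ Qf := by
    intro k
    simp only [Finset.mem_image]
    constructor
    · rintro ⟨q, hq, rfl⟩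
      have : (r:ℤ) - 1 - ((r:ℤ) - 1 - q) = q := by ring
      rwa [this]
    · intro hq; exact ⟨(r:ℤ) - 1 - k, hq, by ring⟩
  refine ⟨Qf.image (fun q => (r:ℤ) - 1 - q), ?_, ?_, ?_, ?_⟩
  · intro k; rw [VRibbonAt, hmem, hdf]
  · intro j
    have key : (revc t (-1-j) : ℚ) + (if (-1-j) + r ∈ Qf then 1 else 0)
        = (revc s (-1-j) : ℚ) + (if (-1-j) ∈ Qf then 1 else 0) := by
      have e : revc t (-1-j) + (if (-1-j) + r ∈ Qf then 1 else 0)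
          = revc s (-1-j) + (if (-1-j) ∈ Qf then 1 else 0) := by
        rw [← hws (-1-j), ← hwt (-1-j)]
      calc (revc t (-1-j) : ℚ) + (if (-1-j) + r ∈ Qf then 1 else 0)
          = ((revc t (-1-j) + (if (-1-j) + r ∈ Qf then 1 else 0) : ℕ) : ℚ) := by
            push_cast [cast_ite_nat]; ring
        _ = ((revc s (-1-j) + (if (-1-j) ∈ Qf then 1 else 0) : ℕ) : ℚ) := by rw [e]
        _ = _ := by push_cast [cast_ite_nat]; ring
    rw [revc_cast t ht, revc_cast s hs] at key
    have m1 : j ∈ Qf.image (fun q => (r:ℤ) - 1 - q) ↔ (-1 - j + (r:ℤ)) ∈ Qf := by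
      rw [hdf j]
      have e : (r:ℤ) - 1 - j = -1 - j + (r:ℤ) := by ring
      rw [e]
    have m2 : j + (r:ℤ) ∈ Qf.image (fun q => (r:ℤ) - 1 - q) ↔ (-1 - j) ∈ Qf := by
      rw [hdf (j + (r:ℤ))]
      have e : (r:ℤ) - 1 - (j + (r:ℤ)) = -1 - j := by ring
      rw [e]
    simp only [m1, m2]
    have hsj : -1 - (-1 - j) = j := by ring
    rw [hsj] at key
    split_ifs at key ⊢ <;> linarith [key]
  · intro k hk
    rw [hdf] at hk
    have := (hquad _ hk).1
    rw [revc] at this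
    have hb := hs (-1 - ((r:ℤ) - 1 - k))
    have he : -1 - ((r:ℤ) - 1 - k) = k - r := by ring
    rw [he] at this hb
    omega
  · -- spin formula
    have hset : {q : ℤ | RibbonAt r (revc s) (revc t) q} = (Qf : Set ℤ) := by
      ext q; simpa using hmem q
    rw [twoSpinV, hset, finsum_mem_coe_finset]
    have hwbit : ∀ x, w x ≤ 1 := by
      intro x
      rw [hws x]
      by_cases hx : x ∈ Qf
      · simp [hx, (hquad x hx).1]
      · simpa [hx] using (by rw [revc]; omega : revc s x ≤ 1)
    have hhgt : ∀ q, hgtAt r w q ≤ r - 1 := by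
      intro q
      rw [hgtAt]
      calc ∑ j ∈ Finset.Ico 1 r, w (q - (j:ℤ)) ≤ ∑ j ∈ Finset.Ico 1 r, 1 :=
        Finset.sum_le_sum fun j _ => hwbit _
      _ = r - 1 := by simp [Nat.card_Ico]
    have hcast : (((∑ q ∈ Qf, (r - 1 - hgtAt r w q) : ℕ)) : ℚ)
        = ∑ q ∈ Qf, (((r:ℚ) - 1) - (hgtAt r w q : ℚ)) := by
      push_cast
      refine Finset.sum_congr rfl fun q _ => ?_
      rw [Nat.cast_sub (hhgt q), Nat.cast_sub hr]
      push_cast; ring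
    rw [hcast]
    have hterm : ∀ q ∈ Qf, ((r:ℚ) - 1) - (hgtAt r w q : ℚ)
        = ∑ j ∈ Finset.Ico 1 r, ((1:ℚ) - (w (q - (j:ℤ)) : ℚ)) := by
      intro q _
      rw [Finset.sum_sub_distrib, Finset.sum_const, Nat.card_Ico, hgtAt, nsmul_eq_mul]
      push_cast [Nat.cast_sub hr]
      ring
    rw [Finset.sum_congr rfl hterm]
    rw [Finset.sum_image (by intro x _ y _ hxy; omega :
      ∀ x ∈ Qf, ∀ y ∈ Qf, (r:ℤ) - 1 - x = (r:ℤ) - 1 - y → x = y)]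
    refine Finset.sum_congr rfl fun q hq => ?_
    refine Finset.sum_nbij' (i := fun j => r - j) (j := fun j => r - j) ?_ ?_ ?_ ?_ ?_
    · intro a ha; simp only [Finset.mem_Ico] at ha ⊢; omega
    · intro a ha; simp only [Finset.mem_Ico] at ha ⊢; omega
    · intro a ha; simp only [Finset.mem_Ico] at ha ⊢; omega
    · intro a ha; simp only [Finset.mem_Ico] at ha ⊢; omega
    · intro a ha; simp only [Finset.mem_Ico] at ha
      have hc : ((r - a : ℕ) : ℤ) = (r:ℤ) - (a:ℤ) := by omega
      rw [hc]
      rw [hws (q - (a:ℤ))]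
      push_cast [cast_ite_nat]
      rw [revc_cast s hs]
      simp only [hdf]
      have e1 : -1 - (q - (a:ℤ)) = (a:ℤ) - 1 - q := by ring
      have e2 : (r:ℤ) - 1 - q - ((r:ℤ) - (a:ℤ)) = (a:ℤ) - 1 - q := by ring
      rw [e1, e2]
      have e3 : (r:ℤ) - 1 - ((a:ℤ) - 1 - q + (r:ℤ)) = q - (a:ℤ) := by ring
      rw [e3]
      ring

lemma sum_congr_supp (f : ℤ → ℚ) (X Y : Finset ℤ) (h : ∀ k, f k ≠ 0 → k ∈ X ∧ k ∈ Y) :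
    ∑ k ∈ X, f k = ∑ k ∈ Y, f k := by
  rw [Finset.sum_subset (Finset.subset_union_left (s₂ := Y))
      (fun x _ hx => by_contra fun hf => hx (h x hf).1),
    Finset.sum_subset (Finset.subset_union_right (s₁ := X))
      (fun x _ hx => by_contra fun hf => hx (h x hf).2)]

lemma sum_indicator_mul (X U : Finset ℤ) (hXU : X ⊆ U) (F : ℤ → ℚ) :
    ∑ k ∈ U, (if k ∈ X then (1:ℚ) else 0) * F k = ∑ k ∈ X, F k := by
  rw [← Finset.sum_subset hXU (fun k _ hk => by simp [hk])]
  exact Finset.sum_congr rfl fun k hk => by simp [hk]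

lemma pair_swap (r : ℕ) (U : Finset ℤ) (x y : ℤ → ℚ)
    (hx : ∀ k, x k ≠ 0 → k ∈ U) (hy : ∀ k, y k ≠ 0 → k ∈ U) :
    ∑ k ∈ U, ∑ j ∈ Finset.Ico 1 r, x k * y (k - (j:ℤ) + r)
      = ∑ k ∈ U, ∑ j ∈ Finset.Ico 1 r, y k * x (k - (j:ℤ)) := by
  have step1 : ∀ k : ℤ, ∑ j ∈ Finset.Ico 1 r, x k * y (k - (j:ℤ) + r)
      = ∑ j ∈ Finset.Ico 1 r, x k * y (k + (j:ℤ)) := by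
    intro k
    refine Finset.sum_nbij' (i := fun j => r - j) (j := fun j => r - j) ?_ ?_ ?_ ?_ ?_
    · intro a ha; simp only [Finset.mem_Ico] at ha ⊢; omega
    · intro a ha; simp only [Finset.mem_Ico] at ha ⊢; omega
    · intro a ha; simp only [Finset.mem_Ico] at ha ⊢; omega
    · intro a ha; simp only [Finset.mem_Ico] at ha ⊢; omega
    · intro a ha; simp only [Finset.mem_Ico] at ha
      have hc : ((r - a : ℕ) : ℤ) = (r:ℤ) - (a:ℤ) := by omega
      rw [hc]
      congr 2
      ring
  rw [Finset.sum_congr rfl fun k _ => step1 k]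
  rw [Finset.sum_comm, Finset.sum_comm (s := U)]
  refine Finset.sum_congr rfl fun j _ => ?_
  -- goal : ∑ k ∈ U, x k * y (k + j) = ∑ k ∈ U, y k * x (k - j)
  have hmap : ∑ k ∈ U, x k * y (k + (j:ℤ))
      = ∑ k ∈ U.map (addRightEmbedding (j:ℤ)), x (k - (j:ℤ)) * y k := by
    rw [Finset.sum_map]
    refine Finset.sum_congr rfl fun k _ => ?_
    simp [addRightEmbedding]
  rw [hmap]
  rw [sum_congr_supp _ _ U (fun k hk => ?_)]
  · exact Finset.sum_congr rfl fun k _ => mul_comm _ _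
  · constructor
    · rw [Finset.mem_map]
      refine ⟨k - (j:ℤ), hx _ fun h0 => hk (by rw [h0]; ring), ?_⟩
      simp [addRightEmbedding]
    · exact hy k fun h0 => hk (by rw [h0]; ring)

lemma edgeSeq_bit (f : ℕ → ℕ) : IsBitSeq (edgeSeq f) := by
  intro i; rw [edgeSeq]; split <;> omega

lemma edgeSeq_bound (f : ℕ → ℕ) (hf : IsPartition f) (i : ℤ) (hi : (f 0 : ℤ) ≤ i) :
    edgeSeq f i = 0 := by
  rw [edgeSeq, if_neg]
  rintro ⟨j, hj⟩
  have := hf.1 0 j (Nat.zero_le j)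
  omega

lemma Ecross_eq_sum (f : ℕ → ℕ) (hf : IsPartition f) (k M : ℤ) (hM : (f 0 : ℤ) ≤ M)
    (hkM : k ≤ M) :
    (Ecross f k : ℚ) = ∑ i ∈ Finset.Ico k M, (edgeSeq f i : ℚ) := by
  have hfin : (Set.Ici k ∩ Function.support (edgeSeq f)).Finite := by
    apply Set.Finite.subset (Set.finite_Icc k M)
    rintro i ⟨hi1, hi2⟩
    refine ⟨hi1, ?_⟩
    by_contra hc
    exact hi2 (edgeSeq_bound f hf i (by push_neg at hc; omega))
  rw [Ecross, finsum_mem_eq_sum _ hfin]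
  have hsub : hfin.toFinset ⊆ Finset.Ico k M := by
    intro i hi
    rw [Set.Finite.mem_toFinset] at hi
    obtain ⟨hi1, hi2⟩ := hi
    rw [Finset.mem_Ico]
    refine ⟨hi1, ?_⟩
    by_contra hc
    exact hi2 (edgeSeq_bound f hf i (by omega))
  rw [Finset.sum_subset hsub (fun i hi1 hi2 => by
    by_contra hc
    rw [Set.Finite.mem_toFinset] at hi2
    exact hi2 ⟨(Finset.mem_Ico.1 hi1).1, hc⟩)]
  push_cast
  rfl

lemma window0 (r : ℕ) (g : ℤ → ℚ) (k : ℤ) :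
    ∑ i ∈ Finset.Ico (k + 1 - r) k, g i = ∑ j ∈ Finset.Ico 1 r, g (k - (j:ℤ)) := by
  refine Finset.sum_nbij' (i := fun x => (k - x).toNat) (j := fun j => k - (j:ℤ)) ?_ ?_ ?_ ?_ ?_
  · intro a ha; simp only [Finset.mem_Ico] at ha ⊢; omega
  · intro a ha; simp only [Finset.mem_Ico] at ha ⊢; omega
  · intro a ha; simp only [Finset.mem_Ico] at ha ⊢; omega
  · intro a ha; simp only [Finset.mem_Ico] at ha ⊢; omega
  · intro a ha; simp only [Finset.mem_Ico] at ha
    have e : k - ((k - a).toNat : ℤ) = a := by omega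
    rw [e]

lemma window1 (r : ℕ) (hr : 1 ≤ r) (g : ℤ → ℚ) (k : ℤ) :
    ∑ i ∈ Finset.Ico (k - r) k, g i = g (k - r) + ∑ j ∈ Finset.Ico 1 r, g (k - (j:ℤ)) := by
  have h1 : Finset.Ico (k - r) k = insert (k - r) (Finset.Ico (k + 1 - r) k) := by
    ext x; simp only [Finset.mem_Ico, Finset.mem_insert]; omega
  rw [h1, Finset.sum_insert (by simp only [Finset.mem_Ico]; omega), window0]

lemma window2 (r : ℕ) (hr : 1 ≤ r) (g : ℤ → ℚ) (k : ℤ) :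
    ∑ i ∈ Finset.Ico (k + 1 - r) (k + 1), g i = g k + ∑ j ∈ Finset.Ico 1 r, g (k - (j:ℤ)) := by
  have h1 : Finset.Ico (k + 1 - r) (k + 1) = insert k (Finset.Ico (k + 1 - r) k) := by
    ext x; simp only [Finset.mem_Ico, Finset.mem_insert]; omega
  rw [h1, Finset.sum_insert (by simp only [Finset.mem_Ico]; omega), window0]

lemma sum_Ico_split (F : ℤ → ℚ) (a b c : ℤ) (hab : a ≤ b) (hbc : b ≤ c) :
    ∑ i ∈ Finset.Ico a b, F i + ∑ i ∈ Finset.Ico b c, F i = ∑ i ∈ Finset.Ico a c, F i := by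
  rw [← Finset.sum_union (Finset.Ico_disjoint_Ico_consecutive a b c),
    Finset.Ico_union_Ico_eq_Ico hab hbc]

lemma Delta_eq (r : ℕ) (hr : 1 ≤ r) (mu nu : ℕ → ℕ) (hm : IsPartition mu) (hn : IsPartition nu)
    (Cf Df : Finset ℤ)
    (hrel : ∀ i : ℤ, (edgeSeq mu i : ℚ)
      = (edgeSeq nu i : ℚ) + (if i ∈ Cf then (1:ℚ) else 0) - (if i ∈ Df then (1:ℚ) else 0)
        - (if i + r ∈ Cf then (1:ℚ) else 0) + (if i + r ∈ Df then (1:ℚ) else 0))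
    (k : ℤ) :
    Delta r mu nu k = ∑ i ∈ Finset.Ico (k - r) k,
      ((edgeSeq nu i : ℚ) + (if i ∈ Cf then (1:ℚ) else 0) - (if i ∈ Df then (1:ℚ) else 0)) := by
  obtain ⟨M0, hM0⟩ := (Cf ∪ Df).finite_toSet.exists_le
  set M : ℤ := max (max ((mu 0 : ℤ)) ((nu 0 : ℤ))) (max k (M0 + 1)) with hMdef
  have hCM : ∀ i : ℤ, M ≤ i → i ∉ Cf := by
    intro i hi hc
    have := hM0 i (by simp [hc])
    omega
  have hDM : ∀ i : ℤ, M ≤ i → i ∉ Df := by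
    intro i hi hc
    have := hM0 i (by simp [hc])
    omega
  rw [Delta, Ecross_eq_sum mu hm (k - r) M (by omega) (by omega),
    Ecross_eq_sum nu hn k M (by omega) (by omega)]
  have hmusplit : ∑ i ∈ Finset.Ico (k - r) M, (edgeSeq mu i : ℚ)
      = ∑ i ∈ Finset.Ico (k - r) M, (edgeSeq nu i : ℚ)
        + ∑ i ∈ Finset.Ico (k - r) M, (if i ∈ Cf then (1:ℚ) else 0)
        - ∑ i ∈ Finset.Ico (k - r) M, (if i ∈ Df then (1:ℚ) else 0)
        - ∑ i ∈ Finset.Ico (k - r) M, (if i + r ∈ Cf then (1:ℚ) else 0)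
        + ∑ i ∈ Finset.Ico (k - r) M, (if i + r ∈ Df then (1:ℚ) else 0) := by
    rw [← Finset.sum_add_distrib, ← Finset.sum_sub_distrib, ← Finset.sum_sub_distrib,
      ← Finset.sum_add_distrib]
    exact Finset.sum_congr rfl fun i _ => hrel i
  have hshift : ∀ X : Finset ℤ, ∑ i ∈ Finset.Ico (k - r) M, (if i + r ∈ X then (1:ℚ) else 0)
      = ∑ i ∈ Finset.Ico k (M + r), (if i ∈ X then (1:ℚ) else 0) := by
    intro X
    have h2 : Finset.Ico k (M + r) = (Finset.Ico (k - r) M).map (addRightEmbedding (r:ℤ)) := by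
      rw [Finset.map_add_right_Ico]
      congr 1
      omega
    rw [h2, Finset.sum_map]
    exact Finset.sum_congr rfl fun i _ => by simp [addRightEmbedding]; congr
  have hsplitR : ∀ X : Finset ℤ, (∀ i : ℤ, M ≤ i → i ∉ X) →
      ∑ i ∈ Finset.Ico k (M + r), (if i ∈ X then (1:ℚ) else 0)
      = ∑ i ∈ Finset.Ico k M, (if i ∈ X then (1:ℚ) else 0) := by
    intro X hX
    rw [← sum_Ico_split (fun i => if i ∈ X then (1:ℚ) else 0) k M (M + r) (by omega) (by omega)]
    have h0 : ∑ i ∈ Finset.Ico M (M + r), (if i ∈ X then (1:ℚ) else 0) = 0 :=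
      Finset.sum_eq_zero fun i hi => by
        rw [Finset.mem_Ico] at hi
        simp [hX i hi.1]
    rw [h0, add_zero]
  have hsplitL : ∀ F : ℤ → ℚ, ∑ i ∈ Finset.Ico (k - r) k, F i + ∑ i ∈ Finset.Ico k M, F i
      = ∑ i ∈ Finset.Ico (k - r) M, F i := fun F =>
    sum_Ico_split F _ _ _ (by omega) (by omega)
  have e1 := hshift Cf
  have e2 := hshift Df
  have e3 := hsplitR Cf hCM
  have e4 := hsplitR Df hDM
  have e5 := hsplitL (fun i => (edgeSeq nu i : ℚ))
  have e6 := hsplitL (fun i => (if i ∈ Cf then (1:ℚ) else 0))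
  have e7 := hsplitL (fun i => (if i ∈ Df then (1:ℚ) else 0))
  have hgoal : ∑ i ∈ Finset.Ico (k - r) k,
      ((edgeSeq nu i : ℚ) + (if i ∈ Cf then (1:ℚ) else 0) - (if i ∈ Df then (1:ℚ) else 0))
      = ∑ i ∈ Finset.Ico (k - r) k, (edgeSeq nu i : ℚ)
        + ∑ i ∈ Finset.Ico (k - r) k, (if i ∈ Cf then (1:ℚ) else 0)
        - ∑ i ∈ Finset.Ico (k - r) k, (if i ∈ Df then (1:ℚ) else 0) := by
    rw [← Finset.sum_add_distrib, ← Finset.sum_sub_distrib]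
  rw [hgoal, hmusplit]
  linarith [e1, e2, e3, e4, e5, e6, e7]

/-- The spin difference lemma: with `μ/λ`, `κ/ν` horizontal and `ν/λ`, `κ/μ` vertical
`r`-ribbon strips, `S` the diagonals carrying heads of ribbons of both `μ/λ` and
`ν/λ`, and `T` those of both `κ/μ` and `κ/ν`, one has
`spinᵛ(κ/μ) + spin(κ/ν) - spin(μ/λ) - spinᵛ(ν/λ)
  = Σ_{k∈T} Δʳ(μ,ν)_{k+1} - Σ_{k∈S} Δʳ(μ,ν)_k`. -/
theorem stmt17 (r : ℕ) (hr : 1 ≤ r) (lam mu nu kap : ℕ → ℕ)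
    (hl : IsPartition lam) (hm : IsPartition mu) (hn : IsPartition nu)
    (hk : IsPartition kap)
    (h1 : HStrip r (edgeSeq lam) (edgeSeq mu))
    (h2 : VStrip r (edgeSeq lam) (edgeSeq nu))
    (h3 : VStrip r (edgeSeq mu) (edgeSeq kap))
    (h4 : HStrip r (edgeSeq nu) (edgeSeq kap)) :
    ((twoSpinV r (edgeSeq mu) (edgeSeq kap) : ℚ)
        + (twoSpin r (edgeSeq nu) (edgeSeq kap) : ℚ)) / 2
      - ((twoSpin r (edgeSeq lam) (edgeSeq mu) : ℚ)
        + (twoSpinV r (edgeSeq lam) (edgeSeq nu) : ℚ)) / 2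
    = (∑ᶠ k ∈ {k : ℤ | VRibbonAt r (edgeSeq mu) (edgeSeq kap) k ∧
          RibbonAt r (edgeSeq nu) (edgeSeq kap) k}, Delta r mu nu (k + 1))
      - ∑ᶠ k ∈ {k : ℤ | RibbonAt r (edgeSeq lam) (edgeSeq mu) k ∧
          VRibbonAt r (edgeSeq lam) (edgeSeq nu) k}, Delta r mu nu k := by
  classical
  obtain ⟨Cf, hCmem, hRel1, hCquad, hS1⟩ := hstrip_main r (edgeSeq lam) (edgeSeq mu) h1
  obtain ⟨Bf, hBmem, hRel4, hBquad, hS4⟩ := hstrip_main r (edgeSeq nu) (edgeSeq kap) h4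
  obtain ⟨Df, hDmem, hRel2, hDquad, hSV2⟩ :=
    vstrip_main r hr (edgeSeq lam) (edgeSeq nu) (edgeSeq_bit lam) (edgeSeq_bit nu) h2
  obtain ⟨Af, hAmem, hRel3, hAquad, hSV3⟩ :=
    vstrip_main r hr (edgeSeq mu) (edgeSeq kap) (edgeSeq_bit mu) (edgeSeq_bit kap) h3
  set U : Finset ℤ := Af ∪ Bf ∪ Cf ∪ Df with hUdef
  have hAU : Af ⊆ U := by intro x hx; simp [hUdef, hx]
  have hBU : Bf ⊆ U := by intro x hx; simp [hUdef, hx]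
  have hCU : Cf ⊆ U := by intro x hx; simp [hUdef, hx]
  have hDU : Df ⊆ U := by intro x hx; simp [hUdef, hx]
  obtain ⟨M0, hM0⟩ := U.finite_toSet.exists_le
  -- the multiset identity a + c = b + d
  have hsum : ∀ k : ℤ, (if k ∈ Af then (1:ℚ) else 0) + (if k ∈ Cf then (1:ℚ) else 0)
      = (if k ∈ Bf then (1:ℚ) else 0) + (if k ∈ Df then (1:ℚ) else 0) := by
    have hstep : ∀ j : ℤ,
        (if j ∈ Af then (1:ℚ) else 0) + (if j ∈ Cf then (1:ℚ) else 0)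
          - (if j ∈ Bf then (1:ℚ) else 0) - (if j ∈ Df then (1:ℚ) else 0)
        = (if j + r ∈ Af then (1:ℚ) else 0) + (if j + r ∈ Cf then (1:ℚ) else 0)
          - (if j + r ∈ Bf then (1:ℚ) else 0) - (if j + r ∈ Df then (1:ℚ) else 0) :=
      fun j => by linarith [hRel1 j, hRel2 j, hRel3 j, hRel4 j]
    have hiter : ∀ (n : ℕ) (j : ℤ),
        (if j ∈ Af then (1:ℚ) else 0) + (if j ∈ Cf then (1:ℚ) else 0)
          - (if j ∈ Bf then (1:ℚ) else 0) - (if j ∈ Df then (1:ℚ) else 0)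
        = (if j + (n:ℤ) * r ∈ Af then (1:ℚ) else 0) + (if j + (n:ℤ) * r ∈ Cf then (1:ℚ) else 0)
          - (if j + (n:ℤ) * r ∈ Bf then (1:ℚ) else 0)
          - (if j + (n:ℤ) * r ∈ Df then (1:ℚ) else 0) := by
      intro n
      induction n with
      | zero => intro j; norm_num
      | succ n ih =>
        intro j
        have e0 : j + ((n:ℤ) + 1) * r = (j + r) + (n:ℤ) * r := by ring
        have e1 : ((n + 1 : ℕ) : ℤ) = (n:ℤ) + 1 := by push_cast; ring
        rw [e1, e0, ← ih (j + r)]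
        exact hstep j
    intro k
    set n : ℕ := (M0 + 1 - k).toNat with hndef
    have h6 := hiter n k
    have hn1 : (M0 + 1 - k) ≤ (n:ℤ) := Int.self_le_toNat _
    have hr' : (1:ℤ) ≤ (r:ℤ) := by exact_mod_cast hr
    have hn0 : (0:ℤ) ≤ (n:ℤ) := Int.natCast_nonneg n
    have hbig : M0 < k + (n:ℤ) * r := by nlinarith
    have hnotU : (k + (n:ℤ) * r) ∉ U := fun hc => by
      have := hM0 _ (Finset.mem_coe.2 hc); omega
    have hA : (k + (n:ℤ) * r) ∉ Af := fun hc => hnotU (hAU hc)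
    have hB : (k + (n:ℤ) * r) ∉ Bf := fun hc => hnotU (hBU hc)
    have hC : (k + (n:ℤ) * r) ∉ Cf := fun hc => hnotU (hCU hc)
    have hD : (k + (n:ℤ) * r) ∉ Df := fun hc => hnotU (hDU hc)
    rw [if_neg hA, if_neg hB, if_neg hC, if_neg hD] at h6
    linarith
  have hb : ∀ m : ℤ, (if m ∈ Bf then (1:ℚ) else 0)
      = (if m ∈ Af then (1:ℚ) else 0) + (if m ∈ Cf then (1:ℚ) else 0)
        - (if m ∈ Df then (1:ℚ) else 0) := fun m => by linarith [hsum m]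
  -- pointwise vanishing claims
  have hg1 : ∀ k ∈ Af ∩ Bf, (edgeSeq nu k : ℚ) + (if k ∈ Cf then (1:ℚ) else 0)
      - (if k ∈ Df then (1:ℚ) else 0) = 0 := by
    intro k hk
    rw [Finset.mem_inter] at hk
    have h0 : edgeSeq nu k = 0 := (hBquad k hk.2).1
    have h5 := hsum k
    rw [if_pos hk.1, if_pos hk.2] at h5
    rw [h0]
    push_cast
    linarith
  have hg2 : ∀ k ∈ Cf ∩ Df, (edgeSeq nu (k - r) : ℚ) + (if k - (r:ℤ) ∈ Cf then (1:ℚ) else 0)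
      - (if k - (r:ℤ) ∈ Df then (1:ℚ) else 0) = 0 := by
    intro k hk
    rw [Finset.mem_inter] at hk
    have h0 : edgeSeq lam (k - r) = 1 := hDquad k hk.2
    have h5 := (hCquad k hk.1).2
    rw [h0] at h5
    have h7 := hRel2 (k - (r:ℤ))
    have e : k - (r:ℤ) + r = k := by ring
    rw [e, if_pos hk.2, h0] at h7
    push_cast at h5 h7
    linarith
  have claim3 : ∀ k : ℤ, (if k ∈ Af ∩ Bf then (1:ℚ) else 0) - (if k ∈ Cf ∩ Df then (1:ℚ) else 0)
      = (if k ∈ Af then (1:ℚ) else 0) - (if k ∈ Df then (1:ℚ) else 0) := by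
    intro k
    have h6 := hsum k
    by_cases hA : k ∈ Af <;> by_cases hB : k ∈ Bf <;> by_cases hC : k ∈ Cf <;>
      by_cases hD : k ∈ Df <;>
      simp only [Finset.mem_inter, hA, hB, hC, hD, if_true, if_false, and_true, and_false,
        true_and, false_and, and_self, if_pos, if_neg, not_false_iff, true_iff] at h6 ⊢ <;>
      first
      | rfl
      | linarith
  -- Delta in window form
  have hrelmunu : ∀ i : ℤ, (edgeSeq mu i : ℚ)
      = (edgeSeq nu i : ℚ) + (if i ∈ Cf then (1:ℚ) else 0) - (if i ∈ Df then (1:ℚ) else 0)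
        - (if i + r ∈ Cf then (1:ℚ) else 0) + (if i + r ∈ Df then (1:ℚ) else 0) :=
    fun i => by linarith [hRel1 i, hRel2 i]
  have hdelta := Delta_eq r hr mu nu hm hn Cf Df hrelmunu
  -- convert the RHS finsums to finset sums
  have hTset : {k : ℤ | VRibbonAt r (edgeSeq mu) (edgeSeq kap) k ∧
      RibbonAt r (edgeSeq nu) (edgeSeq kap) k} = ((Af ∩ Bf : Finset ℤ) : Set ℤ) := by
    ext k
    simp [hAmem k, hBmem k, Finset.mem_inter]
  have hSset : {k : ℤ | RibbonAt r (edgeSeq lam) (edgeSeq mu) k ∧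
      VRibbonAt r (edgeSeq lam) (edgeSeq nu) k} = ((Cf ∩ Df : Finset ℤ) : Set ℤ) := by
    ext k
    simp [hCmem k, hDmem k, Finset.mem_inter]
  rw [hTset, hSset, finsum_mem_coe_finset, finsum_mem_coe_finset]
  -- rewrite Delta sums
  have hT1 : ∑ k ∈ Af ∩ Bf, Delta r mu nu (k + 1)
      = ∑ k ∈ Af ∩ Bf, ∑ j ∈ Finset.Ico 1 r, ((edgeSeq nu (k - (j:ℤ)) : ℚ)
          + (if k - (j:ℤ) ∈ Cf then (1:ℚ) else 0) - (if k - (j:ℤ) ∈ Df then (1:ℚ) else 0)) := by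
    refine Finset.sum_congr rfl fun k hk => ?_
    rw [hdelta (k + 1), window2 r hr (fun m => (edgeSeq nu m : ℚ)
      + (if m ∈ Cf then (1:ℚ) else 0) - (if m ∈ Df then (1:ℚ) else 0)) k]
    have e : k + 1 - (r:ℤ) = k + 1 - (r:ℤ) := rfl
    simp only [hg1 k hk, zero_add]
  have hT2 : ∑ k ∈ Cf ∩ Df, Delta r mu nu k
      = ∑ k ∈ Cf ∩ Df, ∑ j ∈ Finset.Ico 1 r, ((edgeSeq nu (k - (j:ℤ)) : ℚ)
          + (if k - (j:ℤ) ∈ Cf then (1:ℚ) else 0) - (if k - (j:ℤ) ∈ Df then (1:ℚ) else 0)) := by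
    refine Finset.sum_congr rfl fun k hk => ?_
    rw [hdelta k, window1 r hr (fun m => (edgeSeq nu m : ℚ)
      + (if m ∈ Cf then (1:ℚ) else 0) - (if m ∈ Df then (1:ℚ) else 0)) k]
    simp only [hg2 k hk, zero_add]
  rw [hT1, hT2]
  have hABU : Af ∩ Bf ⊆ U := fun x hx => hAU (Finset.mem_inter.1 hx).1
  have hCDU : Cf ∩ Df ⊆ U := fun x hx => hCU (Finset.mem_inter.1 hx).1
  rw [← sum_indicator_mul (Af ∩ Bf) U hABU, ← sum_indicator_mul (Cf ∩ Df) U hCDU,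
    ← Finset.sum_sub_distrib]
  have hRHS : ∀ k ∈ U, (if k ∈ Af ∩ Bf then (1:ℚ) else 0) * (∑ j ∈ Finset.Ico 1 r,
        ((edgeSeq nu (k - (j:ℤ)) : ℚ) + (if k - (j:ℤ) ∈ Cf then (1:ℚ) else 0)
          - (if k - (j:ℤ) ∈ Df then (1:ℚ) else 0)))
      - (if k ∈ Cf ∩ Df then (1:ℚ) else 0) * (∑ j ∈ Finset.Ico 1 r,
        ((edgeSeq nu (k - (j:ℤ)) : ℚ) + (if k - (j:ℤ) ∈ Cf then (1:ℚ) else 0)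
          - (if k - (j:ℤ) ∈ Df then (1:ℚ) else 0)))
      = ∑ j ∈ Finset.Ico 1 r, ((if k ∈ Af then (1:ℚ) else 0) - (if k ∈ Df then (1:ℚ) else 0))
        * ((edgeSeq nu (k - (j:ℤ)) : ℚ) + (if k - (j:ℤ) ∈ Cf then (1:ℚ) else 0)
          - (if k - (j:ℤ) ∈ Df then (1:ℚ) else 0)) := by
    intro k _
    rw [← sub_mul, claim3 k, Finset.mul_sum]
  rw [Finset.sum_congr rfl hRHS]
  -- now the four spin formulas in canonical form
  have hS1' : (twoSpin r (edgeSeq lam) (edgeSeq mu) : ℚ)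
      = ∑ k ∈ U, ∑ j ∈ Finset.Ico 1 r, (if k ∈ Cf then (1:ℚ) else 0)
        * ((edgeSeq nu (k - (j:ℤ)) : ℚ) + (if k - (j:ℤ) + r ∈ Df then (1:ℚ) else 0)
          - (if k - (j:ℤ) ∈ Df then (1:ℚ) else 0) + (if k - (j:ℤ) ∈ Cf then (1:ℚ) else 0)) := by
    rw [hS1, ← sum_indicator_mul Cf U hCU]
    refine Finset.sum_congr rfl fun k _ => ?_
    rw [Finset.mul_sum]
    refine Finset.sum_congr rfl fun j _ => ?_
    have hx : (edgeSeq lam (k - (j:ℤ)) : ℚ) + (if k - (j:ℤ) ∈ Cf then (1:ℚ) else 0)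
        = (edgeSeq nu (k - (j:ℤ)) : ℚ) + (if k - (j:ℤ) + r ∈ Df then (1:ℚ) else 0)
          - (if k - (j:ℤ) ∈ Df then (1:ℚ) else 0) + (if k - (j:ℤ) ∈ Cf then (1:ℚ) else 0) := by
      linarith [hRel2 (k - (j:ℤ))]
    rw [hx]
  have hSV2' : (twoSpinV r (edgeSeq lam) (edgeSeq nu) : ℚ)
      = ∑ k ∈ U, ∑ j ∈ Finset.Ico 1 r, (if k ∈ Df then (1:ℚ) else 0)
        * ((edgeSeq nu (k - (j:ℤ)) : ℚ) - (if k - (j:ℤ) ∈ Df then (1:ℚ) else 0)) := by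
    rw [hSV2, ← sum_indicator_mul Df U hDU]
    refine Finset.sum_congr rfl fun k _ => ?_
    rw [Finset.mul_sum]
    refine Finset.sum_congr rfl fun j _ => ?_
    have hx : (edgeSeq lam (k - (j:ℤ)) : ℚ) - (if k - (j:ℤ) + r ∈ Df then (1:ℚ) else 0)
        = (edgeSeq nu (k - (j:ℤ)) : ℚ) - (if k - (j:ℤ) ∈ Df then (1:ℚ) else 0) := by
      linarith [hRel2 (k - (j:ℤ))]
    rw [hx]
  have hSV3' : (twoSpinV r (edgeSeq mu) (edgeSeq kap) : ℚ)
      = ∑ k ∈ U, ∑ j ∈ Finset.Ico 1 r, (if k ∈ Af then (1:ℚ) else 0)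
        * ((edgeSeq nu (k - (j:ℤ)) : ℚ) + (if k - (j:ℤ) ∈ Cf then (1:ℚ) else 0)
          - (if k - (j:ℤ) ∈ Df then (1:ℚ) else 0) - (if k - (j:ℤ) + r ∈ Cf then (1:ℚ) else 0)
          + (if k - (j:ℤ) + r ∈ Df then (1:ℚ) else 0)
          - (if k - (j:ℤ) + r ∈ Af then (1:ℚ) else 0)) := by
    rw [hSV3, ← sum_indicator_mul Af U hAU]
    refine Finset.sum_congr rfl fun k _ => ?_
    rw [Finset.mul_sum]
    refine Finset.sum_congr rfl fun j _ => ?_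
    have hx : (edgeSeq mu (k - (j:ℤ)) : ℚ) - (if k - (j:ℤ) + r ∈ Af then (1:ℚ) else 0)
        = (edgeSeq nu (k - (j:ℤ)) : ℚ) + (if k - (j:ℤ) ∈ Cf then (1:ℚ) else 0)
          - (if k - (j:ℤ) ∈ Df then (1:ℚ) else 0) - (if k - (j:ℤ) + r ∈ Cf then (1:ℚ) else 0)
          + (if k - (j:ℤ) + r ∈ Df then (1:ℚ) else 0)
          - (if k - (j:ℤ) + r ∈ Af then (1:ℚ) else 0) := by
      linarith [hrelmunu (k - (j:ℤ))]
    rw [hx]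
  have hS4' : (twoSpin r (edgeSeq nu) (edgeSeq kap) : ℚ)
      = ∑ k ∈ U, ∑ j ∈ Finset.Ico 1 r, ((if k ∈ Af then (1:ℚ) else 0)
          + (if k ∈ Cf then (1:ℚ) else 0) - (if k ∈ Df then (1:ℚ) else 0))
        * ((edgeSeq nu (k - (j:ℤ)) : ℚ) + ((if k - (j:ℤ) ∈ Af then (1:ℚ) else 0)
          + (if k - (j:ℤ) ∈ Cf then (1:ℚ) else 0)
          - (if k - (j:ℤ) ∈ Df then (1:ℚ) else 0))) := by
    rw [hS4, ← sum_indicator_mul Bf U hBU]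
    refine Finset.sum_congr rfl fun k _ => ?_
    rw [Finset.mul_sum]
    refine Finset.sum_congr rfl fun j _ => ?_
    rw [hb k, hb (k - (j:ℤ))]
  rw [hS1', hSV2', hSV3', hS4']
  -- the four swap identities
  have hsA : ∀ k : ℤ, (if k ∈ Af then (1:ℚ) else 0) ≠ 0 → k ∈ U := by
    intro k hk
    by_cases h : k ∈ Af
    · exact hAU h
    · simp [h] at hk
  have hsC : ∀ k : ℤ, (if k ∈ Cf then (1:ℚ) else 0) ≠ 0 → k ∈ U := by
    intro k hk
    by_cases h : k ∈ Cf
    · exact hCU h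
    · simp [h] at hk
  have hsD : ∀ k : ℤ, (if k ∈ Df then (1:ℚ) else 0) ≠ 0 → k ∈ U := by
    intro k hk
    by_cases h : k ∈ Df
    · exact hDU h
    · simp [h] at hk
  have sw1 := pair_swap r U (fun k => if k ∈ Af then (1:ℚ) else 0)
    (fun k => if k ∈ Cf then (1:ℚ) else 0) hsA hsC
  have sw2 := pair_swap r U (fun k => if k ∈ Af then (1:ℚ) else 0)
    (fun k => if k ∈ Df then (1:ℚ) else 0) hsA hsD
  have sw3 := pair_swap r U (fun k => if k ∈ Af then (1:ℚ) else 0)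
    (fun k => if k ∈ Af then (1:ℚ) else 0) hsA hsA
  have sw4 := pair_swap r U (fun k => if k ∈ Cf then (1:ℚ) else 0)
    (fun k => if k ∈ Df then (1:ℚ) else 0) hsC hsD
  simp only [mul_add, mul_sub, sub_mul, add_mul, mul_one, mul_zero,
    Finset.sum_add_distrib, Finset.sum_sub_distrib] at sw1 sw2 sw3 sw4 ⊢
  linarith [sw1, sw2, sw3, sw4]
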